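/- Let G be a connected graph of order n and A a nonnegative symmetric n×n matrix. Then there exists a Hamiltonian path P on the vertex set of G such that F_A(G) ≤ F_A(P), where F_A(H) = Σ_{1≤i<j≤n} d_H(i,j)·a_{i,j}. -/

import Mathlib

open SimpleGraph Finset

/-- `F_A(G) = ∑_{i<j} d_G(i,j) · a_{i,j}`. -/
noncomputable def FA {n : ℕ} (A : Matrix (Fin n) (Fin n) ℝ) (G : SimpleGraph (Fin n)) : ℝ :=
  ∑ i : Fin n, ∑ j : Fin n, if i < j then (G.dist i j : ℝ) * A i j else 0

/-- `G` is a path on its vertex set (isomorphic to the path graph). -/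
def IsPathGraph {n : ℕ} (G : SimpleGraph (Fin n)) : Prop :=
  Nonempty (G ≃g SimpleGraph.pathGraph n)

/-- The distance matrix of `G`. -/
noncomputable def distMat {n : ℕ} (G : SimpleGraph (Fin n)) : Matrix (Fin n) (Fin n) ℝ :=
  fun i j => (G.dist i j : ℝ)

/-- The diagonal matrix of row sums of the distance matrix. -/
noncomputable def transMat {n : ℕ} (G : SimpleGraph (Fin n)) : Matrix (Fin n) (Fin n) ℝ :=
  Matrix.diagonal fun i => ∑ j : Fin n, (G.dist i j : ℝ)

/-- Distance signless Laplacian `D^Q(G) = T(G) + D(G)`. -/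
noncomputable def DQmat {n : ℕ} (G : SimpleGraph (Fin n)) : Matrix (Fin n) (Fin n) ℝ :=
  transMat G + distMat G

/-- Distance Laplacian `D^L(G) = T(G) - D(G)`. -/
noncomputable def DLmat {n : ℕ} (G : SimpleGraph (Fin n)) : Matrix (Fin n) (Fin n) ℝ :=
  transMat G - distMat G

/-- Largest eigenvalue of a matrix, as the supremum of its spectrum. -/
noncomputable def maxEig {n : ℕ} (M : Matrix (Fin n) (Fin n) ℝ) : ℝ :=
  sSup (spectrum ℝ M)


section helpers

variable {V : Type} {G : SimpleGraph V}

/-- Transfer a walk whose support lies in `s` to the induced subgraph. -/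
def walkToInduce {s : Set V} :
    ∀ {a b : V} (p : G.Walk a b) (ha : a ∈ s) (hb : b ∈ s),
      (∀ x ∈ p.support, x ∈ s) → (G.induce s).Walk ⟨a, ha⟩ ⟨b, hb⟩
  | _, _, .nil, _, _, _ => .nil
  | _, _, .cons hadj q, _, hb, h =>
      .cons (by exact hadj)
        (walkToInduce q (h _ (by simp)) hb fun x hx => h x (by simp [hx]))

lemma dist_le_dist_induce {s : Set V} (h : (G.induce s).Connected) (x y : s) :
    G.dist x y ≤ (G.induce s).dist x y := by
  obtain ⟨p, hp⟩ := h.exists_walk_length_eq_dist x y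
  have h2 := SimpleGraph.dist_le (p.map (SimpleGraph.Hom.comap Subtype.val G))
  exact h2.trans_eq ((SimpleGraph.Walk.length_map _ _).trans hp)

lemma pathGraph_walk_length_le {n : ℕ} {p q : Fin n} (w : (pathGraph n).Walk p q) :
    ((p.val : ℤ) - q.val).natAbs ≤ w.length := by
  induction w with
  | nil => simp
  | @cons a c b hadj w ih =>
    have h1 : ((a.val : ℤ) - c.val).natAbs = 1 := by
      rcases pathGraph_adj.mp hadj with h | h <;> omega
    have h2 : ((a.val:ℤ) - b.val).natAbs ≤ ((a.val:ℤ) - c.val).natAbs + ((c.val:ℤ) - b.val).natAbs := by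
      have h3 : (a.val:ℤ) - b.val = ((a.val:ℤ) - c.val) + ((c.val:ℤ) - b.val) := by ring
      rw [h3]; exact Int.natAbs_add_le _ _
    rw [SimpleGraph.Walk.length_cons]
    omega

lemma pathGraph_exists_walk {n : ℕ} : ∀ (k : ℕ) (p q : Fin n), p.val + k = q.val →
    ∃ w : (pathGraph n).Walk p q, w.length = k := by
  intro k
  induction k with
  | zero =>
    intro p q h
    have : p = q := Fin.ext (by omega)
    subst this
    exact ⟨.nil, rfl⟩
  | succ k ih =>
    intro p q h
    have hq : q.val = p.val + k + 1 := by omega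
    have hlt : p.val + k < n := by have := q.isLt; omega
    obtain ⟨w, hw⟩ := ih p ⟨p.val + k, hlt⟩ rfl
    have hadj : (pathGraph n).Adj ⟨p.val + k, hlt⟩ q := pathGraph_adj.mpr (Or.inl (by simp [hq]))
    exact ⟨w.concat hadj, by rw [SimpleGraph.Walk.length_concat, hw]⟩

lemma pathGraph_dist_nat {n : ℕ} (p q : Fin n) (hle : p.val ≤ q.val) :
    (pathGraph n).dist p q = q.val - p.val := by
  obtain ⟨w, hw⟩ := pathGraph_exists_walk (q.val - p.val) p q (by omega)
  have h1 : (pathGraph n).dist p q ≤ q.val - p.val := hw ▸ SimpleGraph.dist_le w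
  obtain ⟨w', hw'⟩ := (pathGraph_preconnected n p q).exists_walk_length_eq_dist
  have h2 := pathGraph_walk_length_le w'
  omega

lemma pathGraph_dist_real {n : ℕ} (p q : Fin n) :
    (((pathGraph n).dist p q : ℕ) : ℝ) = |(p.val : ℝ) - q.val| := by
  rcases le_total p.val q.val with h | h
  · rw [pathGraph_dist_nat p q h, abs_sub_comm, abs_of_nonneg (by
      have : (p.val:ℝ) ≤ q.val := by exact_mod_cast h
      linarith)]
    push_cast [h]
    ring
  · rw [SimpleGraph.dist_comm, pathGraph_dist_nat q p h, abs_of_nonneg (by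
      have : (q.val:ℝ) ≤ p.val := by exact_mod_cast h
      linarith)]
    push_cast [h]
    ring

end helpers


lemma conv_max {m : ℕ} (c : Fin m → ℝ) (hc : ∀ j, 0 ≤ c j) (t : Fin m) :
    (∑ j, |(t.val:ℝ) - j.val| * c j ≤ ∑ j, (j.val:ℝ) * c j) ∨
    (∑ j, |(t.val:ℝ) - j.val| * c j ≤ ∑ j, ((m:ℝ) - 1 - j.val) * c j) := by
  have hm : 0 < m := t.pos
  rcases eq_or_lt_of_le (Nat.one_le_iff_ne_zero.mpr (Nat.pos_iff_ne_zero.mp hm)) with h1 | h1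
  · -- m = 1
    left
    have hm1 : m = 1 := h1.symm
    subst hm1
    have ht : t = 0 := Subsingleton.elim _ _
    subst ht
    simp
  · -- 1 < m
    set L : ℝ := (m:ℝ) - 1 with hL
    have hL0 : 0 < L := by
      have : (1:ℝ) < (m:ℝ) := by exact_mod_cast h1
      simp [hL]; linarith
    have hbound : ∀ j : Fin m, (j.val : ℝ) ≤ L := by
      intro j
      have h2 : (j.val:ℝ) + 1 ≤ (m:ℝ) := by exact_mod_cast Nat.succ_le_of_lt j.isLt
      simp only [hL]; linarith
    have ht1 : (t.val:ℝ) ≤ L := hbound t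
    have ht0 : (0:ℝ) ≤ t.val := Nat.cast_nonneg _
    have hterm : ∀ j : Fin m,
        L * (|(t.val:ℝ) - j.val| * c j) ≤
          (L - t.val) * ((j.val:ℝ) * c j) + (t.val:ℝ) * ((L - j.val) * c j) := by
      intro j
      have hj1 := hbound j
      have hj0 : (0:ℝ) ≤ j.val := Nat.cast_nonneg _
      have habs : L * |(t.val:ℝ) - j.val| ≤ (L - t.val) * j.val + (t.val:ℝ) * (L - j.val) := by
        rcases le_total ((t.val:ℝ)) j.val with h | h
        · rw [abs_of_nonpos (by linarith)]; nlinarith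
        · rw [abs_of_nonneg (by linarith)]; nlinarith
      calc L * (|(t.val:ℝ) - j.val| * c j) = (L * |(t.val:ℝ) - j.val|) * c j := by ring
        _ ≤ ((L - t.val) * j.val + (t.val:ℝ) * (L - j.val)) * c j :=
            mul_le_mul_of_nonneg_right habs (hc j)
        _ = (L - t.val) * ((j.val:ℝ) * c j) + (t.val:ℝ) * ((L - j.val) * c j) := by ring
    have hsum := Finset.sum_le_sum (fun j (_ : j ∈ univ) => hterm j)
    rw [Finset.sum_add_distrib, ← Finset.mul_sum, ← Finset.mul_sum, ← Finset.mul_sum] at hsum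
    set S := ∑ j, |(t.val:ℝ) - j.val| * c j
    set S0 := ∑ j, (j.val:ℝ) * c j
    set S1 := ∑ j, (L - j.val) * c j
    have hmax : L * S ≤ L * max S0 S1 := by
      calc L * S ≤ (L - t.val) * S0 + (t.val:ℝ) * S1 := hsum
        _ ≤ (L - t.val) * max S0 S1 + (t.val:ℝ) * max S0 S1 := by
            gcongr
            · exact le_max_left _ _
            · exact le_max_right _ _
        _ = L * max S0 S1 := by ring
    have hfin : S ≤ max S0 S1 := le_of_mul_le_mul_left hmax hL0
    rcases le_max_iff.mp hfin with h | h
    · left; exact h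
    · right; exact h

section main2
variable {V : Type}
variable {V : Type}

/-- The equivalence between `Option {x | x ≠ v}` and `V`. -/
def eqvOpt (v : V) [DecidableEq V] : Option ↥({x : V | x ≠ v}) ≃ V where
  toFun o := o.elim v Subtype.val
  invFun x := if h : x = v then none else some ⟨x, h⟩
  left_inv o := by
    cases o with
    | none => simp
    | some x => simp [show (x:V) ≠ v from x.2]
  right_inv x := by by_cases h : x = v <;> simp [h]

def extEquiv (v : V) [DecidableEq V] {m : ℕ} (u'' : Fin m ≃ ↥({x : V | x ≠ v})) :
    Fin (m+1) ≃ V :=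
  (finSuccEquiv m).trans (u''.optionCongr.trans (eqvOpt v))

@[simp] lemma extEquiv_zero (v : V) [DecidableEq V] {m : ℕ}
    (u'' : Fin m ≃ ↥({x : V | x ≠ v})) : extEquiv v u'' 0 = v := by
  simp [extEquiv, eqvOpt]

@[simp] lemma extEquiv_succ (v : V) [DecidableEq V] {m : ℕ}
    (u'' : Fin m ≃ ↥({x : V | x ≠ v})) (p : Fin m) :
    extEquiv v u'' p.succ = ↑(u'' p) := by
  simp [extEquiv, eqvOpt]

lemma ext_sum (v : V) [DecidableEq V] [Fintype V] {m : ℕ}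
    (A : V → V → ℝ) (hAs : ∀ x y, A x y = A y x)
    (u'' : Fin m ≃ ↥({x : V | x ≠ v})) :
    ∑ p : Fin (m+1), ∑ q : Fin (m+1),
        |(p.val:ℝ) - q.val| * A (extEquiv v u'' p) (extEquiv v u'' q)
      = (∑ p : Fin m, ∑ q : Fin m, |(p.val:ℝ) - q.val| * A ↑(u'' p) ↑(u'' q))
        + 2 * ∑ j : Fin m, ((j.val:ℝ)+1) * A v ↑(u'' j) := by
  rw [Fin.sum_univ_succ]
  rw [Fin.sum_univ_succ (f := fun q : Fin (m+1) =>
    |((0:Fin (m+1)).val:ℝ) - q.val| * A (extEquiv v u'' 0) (extEquiv v u'' q))]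
  have e0 : ∀ q : Fin m,
      |((0:Fin (m+1)).val:ℝ) - (q.succ).val| * A (extEquiv v u'' 0) (extEquiv v u'' q.succ)
      = ((q.val:ℝ)+1) * A v ↑(u'' q) := by
    intro q
    rw [extEquiv_zero, extEquiv_succ]
    congr 1
    rw [Fin.val_zero, Fin.val_succ]
    push_cast
    rw [zero_sub, abs_neg, abs_of_nonneg (by positivity)]
  have e1 : ∀ p : Fin m, ∑ q : Fin (m+1),
      |((p.succ).val:ℝ) - q.val| * A (extEquiv v u'' p.succ) (extEquiv v u'' q)
      = ((p.val:ℝ)+1) * A v ↑(u'' p)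
        + ∑ q : Fin m, |(p.val:ℝ) - q.val| * A ↑(u'' p) ↑(u'' q) := by
    intro p
    rw [Fin.sum_univ_succ]
    congr 1
    · rw [extEquiv_zero, extEquiv_succ, Fin.val_zero, Fin.val_succ]
      rw [hAs (↑(u'' p)) v]
      congr 1
      push_cast
      rw [sub_zero, abs_of_nonneg (by positivity)]
    · apply Finset.sum_congr rfl
      intro q _
      rw [extEquiv_succ, extEquiv_succ]
      congr 1
      rw [Fin.val_succ, Fin.val_succ]
      push_cast
      congr 1
      ring_nf
  rw [Finset.sum_congr rfl (fun q _ => e0 q), Finset.sum_congr rfl (fun p _ => e1 p)]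
  rw [Finset.sum_add_distrib]
  simp only [Fin.val_zero, extEquiv_zero]
  rw [sub_self, abs_zero, zero_mul]
  ring
end main2

lemma cast_rev {m : ℕ} (j : Fin m) : ((j.rev.val : ℕ) : ℝ) = (m:ℝ) - 1 - j.val := by
  have h1 := j.isLt
  have h2 : j.rev.val = m - 1 - j.val := by
    rw [Fin.val_rev]; omega
  rw [h2]
  have h3 : ((m - 1 - j.val : ℕ) : ℝ) = ((m:ℕ):ℝ) - 1 - (j.val:ℝ) := by
    rw [Nat.cast_sub (by omega), Nat.cast_sub (by omega)]
    simp
  rw [h3]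

lemma sum_option_decomp {W : Type} [Fintype W] [DecidableEq W] (v : W) (F : W → ℝ) :
    ∑ x : W, F x = F v + ∑ x : ↥({x : W | x ≠ v}), F ↑x := by
  calc ∑ x : W, F x = ∑ o : Option ↥({x : W | x ≠ v}), F (eqvOpt v o) :=
        (Equiv.sum_comp (eqvOpt v) F).symm
    _ = F v + ∑ x : ↥({x : W | x ≠ v}), F ↑x := by rw [Fintype.sum_option]; rfl

lemma sum2_option_decomp {W : Type} [Fintype W] [DecidableEq W] (v : W) (f : W → W → ℝ)
    (hf0 : f v v = 0) :
    ∑ x : W, ∑ y : W, f x y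
      = (∑ x : ↥({x : W | x ≠ v}), ∑ y : ↥({x : W | x ≠ v}), f ↑x ↑y)
        + ((∑ y : ↥({x : W | x ≠ v}), f v ↑y) + (∑ x : ↥({x : W | x ≠ v}), f ↑x v)) := by
  rw [sum_option_decomp v (fun x => ∑ y : W, f x y)]
  rw [sum_option_decomp v (fun y => f v y)]
  have h1 : ∑ x : ↥({x : W | x ≠ v}), ∑ y : W, f ↑x y
      = ∑ x : ↥({x : W | x ≠ v}), (f ↑x v + ∑ y : ↥({x : W | x ≠ v}), f ↑x ↑y) :=
    Finset.sum_congr rfl (fun x _ => sum_option_decomp v (fun y => f ↑x y))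
  rw [h1, Finset.sum_add_distrib, hf0]
  ring


lemma key : ∀ (m : ℕ) (V : Type) [DecidableEq V] [Fintype V],
    Fintype.card V = m → ∀ (G : SimpleGraph V), G.Connected →
    ∀ (A : V → V → ℝ), (∀ x y, A x y = A y x) → (∀ x y, 0 ≤ A x y) →
    ∃ u : Fin m ≃ V, (∑ x : V, ∑ y : V, (G.dist x y : ℝ) * A x y) ≤
      ∑ p : Fin m, ∑ q : Fin m, |(p.val:ℝ) - q.val| * A (u p) (u q) := by
  intro m
  induction m with
  | zero =>
    intro V _ _ hcard G hG A _ _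
    have h1 : Nonempty V := hG.nonempty
    have h2 := Fintype.card_pos (α := V)
    omega
  | succ m ih =>
    intro V instD instF hcard G hG A hAs hAnn
    rcases Nat.eq_zero_or_pos m with rfl | hm
    · -- base case : card V = 1
      have hsub : ∀ x y : V, x = y := fun x y =>
        Fintype.card_le_one_iff.mp (by omega) x y
      refine ⟨(Fintype.equivFinOfCardEq hcard).symm, ?_⟩
      have hL : (∑ x : V, ∑ y : V, (G.dist x y : ℝ) * A x y) = 0 := by
        apply Finset.sum_eq_zero; intro x _
        apply Finset.sum_eq_zero; intro y _
        rw [hsub x y, SimpleGraph.dist_self]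
        simp
      have hR : (∑ p : Fin 1, ∑ q : Fin 1,
          |(p.val:ℝ) - q.val| * A ((Fintype.equivFinOfCardEq hcard).symm p)
            ((Fintype.equivFinOfCardEq hcard).symm q)) = 0 := by
        apply Finset.sum_eq_zero; intro p _
        apply Finset.sum_eq_zero; intro q _
        have : p = q := Subsingleton.elim _ _
        rw [this, sub_self, abs_zero, zero_mul]
      rw [hL, hR]
    · -- main case : m ≥ 1
      obtain ⟨u0⟩ : Nonempty V := hG.nonempty
      obtain ⟨v, -, hv⟩ := Finset.exists_max_image (univ : Finset V) (G.dist u0)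
        ⟨u0, Finset.mem_univ u0⟩
      have hvu0 : v ≠ u0 := by
        obtain ⟨z, hz⟩ := Fintype.exists_ne_of_one_lt_card (by omega) u0
        intro h
        have h1 : 0 < G.dist u0 z := hG.pos_dist_of_ne (Ne.symm hz)
        have h2 := hv z (Finset.mem_univ z)
        subst h
        rw [SimpleGraph.dist_self] at h2
        omega
      obtain ⟨w, hw⟩ : ∃ w, G.Adj v w := by
        obtain ⟨p⟩ := hG v u0
        cases p with
        | nil => exact absurd rfl hvu0
        | cons h _ => exact ⟨_, h⟩
      have hwv : w ∈ {x : V | x ≠ v} := (G.ne_of_adj hw).symm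
      have hu0s : u0 ∈ {x : V | x ≠ v} := Ne.symm hvu0
      have havoid : ∀ x : V, x ≠ v → ∃ p : G.Walk u0 x, v ∉ p.support := by
        intro x hx
        obtain ⟨p, hp⟩ := hG.exists_walk_length_eq_dist u0 x
        refine ⟨p, fun hvs => ?_⟩
        have h1 : G.dist u0 v ≤ (p.takeUntil v hvs).length := SimpleGraph.dist_le _
        have h2 : (p.dropUntil v hvs).length ≠ 0 := by
          intro h0
          exact hx (SimpleGraph.Walk.eq_of_length_eq_zero h0).symm
        have h3 : (p.takeUntil v hvs).length + (p.dropUntil v hvs).length = p.length := by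
          rw [← SimpleGraph.Walk.length_append, SimpleGraph.Walk.take_spec]
        have h4 := hv x (Finset.mem_univ x)
        omega
      have hG's : (G.induce {x : V | x ≠ v}).Connected := by
        have hreach : ∀ x : ↥({x : V | x ≠ v}), (G.induce {x : V | x ≠ v}).Reachable ⟨u0, hu0s⟩ x := by
          intro x
          obtain ⟨p, hps⟩ := havoid ↑x x.2
          exact ⟨walkToInduce p hu0s x.2 (fun z hz => show z ≠ v from fun h => hps (h ▸ hz))⟩
        rw [SimpleGraph.connected_iff]
        exact ⟨fun x y => (hreach x).symm.trans (hreach y), ⟨⟨u0, hu0s⟩⟩⟩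
      have hdle : ∀ x y : ↥({x : V | x ≠ v}), G.dist ↑x ↑y ≤ (G.induce {x : V | x ≠ v}).dist x y :=
        fun x y => dist_le_dist_induce hG's x y
      have hcard' : Fintype.card ↥({x : V | x ≠ v}) = m := by
        have h1 := Fintype.card_congr (eqvOpt (V := V) v)
        rw [Fintype.card_option] at h1
        omega
      set w' : ↥({x : V | x ≠ v}) := ⟨w, hwv⟩ with hw'def
      set A' : ↥({x : V | x ≠ v}) → ↥({x : V | x ≠ v}) → ℝ := fun x y =>
        A ↑x ↑y + (if x = w' then A v ↑y else 0) + (if y = w' then A v ↑x else 0) with hA'def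
      have hA's : ∀ x y : ↥({x : V | x ≠ v}), A' x y = A' y x := by
        intro x y
        simp only [hA'def]
        rw [hAs (↑x) (↑y)]
        ring
      have hA'nn : ∀ x y : ↥({x : V | x ≠ v}), 0 ≤ A' x y := by
        intro x y
        simp only [hA'def]
        have h1 := hAnn (↑x) (↑y)
        have h2 := hAnn v (↑y)
        have h3 := hAnn v (↑x)
        split_ifs <;> linarith
      obtain ⟨u', hu'⟩ := ih ↥({x : V | x ≠ v}) hcard' (G.induce {x : V | x ≠ v}) hG's A' hA's hA'nn

      -- distance bound from v through w
      have hdvy : ∀ y : ↥({x : V | x ≠ v}), G.dist v ↑y ≤ 1 + (G.induce {x : V | x ≠ v}).dist w' y := by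
        intro y
        have htri := hG.dist_triangle (u := v) (v := w) (w := (↑y : V))
        have h1 : G.dist v w = 1 := SimpleGraph.dist_eq_one_iff_adj.mpr hw
        have h2 : G.dist w ↑y ≤ (G.induce {x : V | x ≠ v}).dist w' y := hdle w' y
        omega
      have hLHS : (∑ x : V, ∑ y : V, (G.dist x y : ℝ) * A x y)
          ≤ (∑ x : ↥({x : V | x ≠ v}), ∑ y : ↥({x : V | x ≠ v}), ((G.induce {x : V | x ≠ v}).dist x y : ℝ) * A ↑x ↑y)
            + 2 * (∑ y : ↥({x : V | x ≠ v}), A v ↑y)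
            + 2 * (∑ y : ↥({x : V | x ≠ v}), ((G.induce {x : V | x ≠ v}).dist w' y : ℝ) * A v ↑y) := by
        rw [sum2_option_decomp v _ (by rw [SimpleGraph.dist_self]; simp)]
        have e1 : ∑ x : ↥({x : V | x ≠ v}), (G.dist ↑x v : ℝ) * A ↑x v
            = ∑ y : ↥({x : V | x ≠ v}), (G.dist v ↑y : ℝ) * A v ↑y :=
          Finset.sum_congr rfl (fun x _ => by rw [SimpleGraph.dist_comm, hAs])
        rw [e1]
        have b1 : (∑ x : ↥({x : V | x ≠ v}), ∑ y : ↥({x : V | x ≠ v}), (G.dist ↑x ↑y : ℝ) * A ↑x ↑y)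
            ≤ ∑ x : ↥({x : V | x ≠ v}), ∑ y : ↥({x : V | x ≠ v}), ((G.induce {x : V | x ≠ v}).dist x y : ℝ) * A ↑x ↑y :=
          Finset.sum_le_sum (fun x _ => Finset.sum_le_sum (fun y _ =>
            mul_le_mul_of_nonneg_right (by exact_mod_cast hdle x y) (hAnn _ _)))
        have b2 : (∑ y : ↥({x : V | x ≠ v}), (G.dist v ↑y : ℝ) * A v ↑y)
            ≤ (∑ y : ↥({x : V | x ≠ v}), A v ↑y) + ∑ y : ↥({x : V | x ≠ v}), ((G.induce {x : V | x ≠ v}).dist w' y : ℝ) * A v ↑y := by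
          rw [← Finset.sum_add_distrib]
          refine Finset.sum_le_sum (fun y _ => ?_)
          have hcst : (G.dist v ↑y : ℝ) ≤ 1 + ((G.induce {x : V | x ≠ v}).dist w' y : ℝ) := by
            exact_mod_cast hdvy y
          calc (G.dist v ↑y : ℝ) * A v ↑y
              ≤ (1 + ((G.induce {x : V | x ≠ v}).dist w' y : ℝ)) * A v ↑y :=
                mul_le_mul_of_nonneg_right hcst (hAnn _ _)
            _ = A v ↑y + ((G.induce {x : V | x ≠ v}).dist w' y : ℝ) * A v ↑y := by ring
        linarith
      have hC : (∑ x : ↥({x : V | x ≠ v}), ∑ y : ↥({x : V | x ≠ v}), ((G.induce {x : V | x ≠ v}).dist x y : ℝ) * A' x y)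
          = (∑ x : ↥({x : V | x ≠ v}), ∑ y : ↥({x : V | x ≠ v}), ((G.induce {x : V | x ≠ v}).dist x y : ℝ) * A ↑x ↑y)
            + 2 * ∑ y : ↥({x : V | x ≠ v}), ((G.induce {x : V | x ≠ v}).dist w' y : ℝ) * A v ↑y := by
        have expand : ∀ x y : ↥({x : V | x ≠ v}), ((G.induce {x : V | x ≠ v}).dist x y : ℝ) * A' x y
            = ((G.induce {x : V | x ≠ v}).dist x y : ℝ) * A ↑x ↑y
              + (if x = w' then ((G.induce {x : V | x ≠ v}).dist x y : ℝ) * A v ↑y else 0)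
              + (if y = w' then ((G.induce {x : V | x ≠ v}).dist x y : ℝ) * A v ↑x else 0) := by
          intro x y
          simp only [hA'def, mul_add, mul_ite, mul_zero]
        calc (∑ x : ↥({x : V | x ≠ v}), ∑ y : ↥({x : V | x ≠ v}), ((G.induce {x : V | x ≠ v}).dist x y : ℝ) * A' x y)
            = (∑ x : ↥({x : V | x ≠ v}), ∑ y : ↥({x : V | x ≠ v}), ((G.induce {x : V | x ≠ v}).dist x y : ℝ) * A ↑x ↑y)
              + (∑ x : ↥({x : V | x ≠ v}), ∑ y : ↥({x : V | x ≠ v}), if x = w' then ((G.induce {x : V | x ≠ v}).dist x y : ℝ) * A v ↑y else 0)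
              + (∑ x : ↥({x : V | x ≠ v}), ∑ y : ↥({x : V | x ≠ v}), if y = w' then ((G.induce {x : V | x ≠ v}).dist x y : ℝ) * A v ↑x else 0) := by
              rw [Finset.sum_congr rfl (fun x _ => Finset.sum_congr rfl (fun y _ => expand x y))]
              simp only [Finset.sum_add_distrib]
          _ = (∑ x : ↥({x : V | x ≠ v}), ∑ y : ↥({x : V | x ≠ v}), ((G.induce {x : V | x ≠ v}).dist x y : ℝ) * A ↑x ↑y)
              + 2 * ∑ y : ↥({x : V | x ≠ v}), ((G.induce {x : V | x ≠ v}).dist w' y : ℝ) * A v ↑y := by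
              have hm2 : (∑ x : ↥({x : V | x ≠ v}), ∑ y : ↥({x : V | x ≠ v}), if x = w' then ((G.induce {x : V | x ≠ v}).dist x y : ℝ) * A v ↑y else 0)
                  = ∑ y : ↥({x : V | x ≠ v}), ((G.induce {x : V | x ≠ v}).dist w' y : ℝ) * A v ↑y := by
                rw [Finset.sum_comm]
                refine Finset.sum_congr rfl (fun y _ => ?_)
                rw [Finset.sum_ite_eq' univ w' (fun x => ((G.induce {x : V | x ≠ v}).dist x y : ℝ) * A v ↑y)]
                simp
              have hm3 : (∑ x : ↥({x : V | x ≠ v}), ∑ y : ↥({x : V | x ≠ v}), if y = w' then ((G.induce {x : V | x ≠ v}).dist x y : ℝ) * A v ↑x else 0)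
                  = ∑ y : ↥({x : V | x ≠ v}), ((G.induce {x : V | x ≠ v}).dist w' y : ℝ) * A v ↑y := by
                have e2 : ∀ x : ↥({x : V | x ≠ v}), (∑ y : ↥({x : V | x ≠ v}), if y = w' then ((G.induce {x : V | x ≠ v}).dist x y : ℝ) * A v ↑x else 0)
                    = ((G.induce {x : V | x ≠ v}).dist w' x : ℝ) * A v ↑x := by
                  intro x
                  rw [Finset.sum_ite_eq' univ w' (fun y => ((G.induce {x : V | x ≠ v}).dist x y : ℝ) * A v ↑x)]
                  simp [SimpleGraph.dist_comm]
                exact Finset.sum_congr rfl (fun x _ => e2 x)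
              rw [hm2, hm3]
              ring
      have hE : (∑ p : Fin m, ∑ q : Fin m, |(p.val:ℝ) - q.val| * A' (u' p) (u' q))
          = (∑ p : Fin m, ∑ q : Fin m, |(p.val:ℝ) - q.val| * A ↑(u' p) ↑(u' q))
            + 2 * ∑ q : Fin m, |((u'.symm w').val:ℝ) - q.val| * A v ↑(u' q) := by
        have expand : ∀ p q : Fin m, |(p.val:ℝ) - q.val| * A' (u' p) (u' q)
            = |(p.val:ℝ) - q.val| * A ↑(u' p) ↑(u' q)
              + (if p = u'.symm w' then |(p.val:ℝ) - q.val| * A v ↑(u' q) else 0)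
              + (if q = u'.symm w' then |(p.val:ℝ) - q.val| * A v ↑(u' p) else 0) := by
          intro p q
          simp only [hA'def, mul_add, mul_ite, mul_zero, Equiv.apply_eq_iff_eq_symm_apply]
        calc (∑ p : Fin m, ∑ q : Fin m, |(p.val:ℝ) - q.val| * A' (u' p) (u' q))
            = (∑ p : Fin m, ∑ q : Fin m, |(p.val:ℝ) - q.val| * A ↑(u' p) ↑(u' q))
              + (∑ p : Fin m, ∑ q : Fin m, if p = u'.symm w' then |(p.val:ℝ) - q.val| * A v ↑(u' q) else 0)
              + (∑ p : Fin m, ∑ q : Fin m, if q = u'.symm w' then |(p.val:ℝ) - q.val| * A v ↑(u' p) else 0) := by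
              rw [Finset.sum_congr rfl (fun p _ => Finset.sum_congr rfl (fun q _ => expand p q))]
              simp only [Finset.sum_add_distrib]
          _ = (∑ p : Fin m, ∑ q : Fin m, |(p.val:ℝ) - q.val| * A ↑(u' p) ↑(u' q))
              + 2 * ∑ q : Fin m, |((u'.symm w').val:ℝ) - q.val| * A v ↑(u' q) := by
              have hm2 : (∑ p : Fin m, ∑ q : Fin m, if p = u'.symm w' then |(p.val:ℝ) - q.val| * A v ↑(u' q) else 0)
                  = ∑ q : Fin m, |((u'.symm w').val:ℝ) - q.val| * A v ↑(u' q) := by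
                rw [Finset.sum_comm]
                refine Finset.sum_congr rfl (fun q _ => ?_)
                rw [Finset.sum_ite_eq' univ (u'.symm w') (fun p => |(p.val:ℝ) - q.val| * A v ↑(u' q))]
                simp
              have hm3 : (∑ p : Fin m, ∑ q : Fin m, if q = u'.symm w' then |(p.val:ℝ) - q.val| * A v ↑(u' p) else 0)
                  = ∑ q : Fin m, |((u'.symm w').val:ℝ) - q.val| * A v ↑(u' q) := by
                have e2 : ∀ p : Fin m, (∑ q : Fin m, if q = u'.symm w' then |(p.val:ℝ) - q.val| * A v ↑(u' p) else 0)
                    = |((u'.symm w').val:ℝ) - p.val| * A v ↑(u' p) := by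
                  intro p
                  rw [Finset.sum_ite_eq' univ (u'.symm w') (fun q => |(p.val:ℝ) - q.val| * A v ↑(u' p))]
                  simp [abs_sub_comm]
                exact Finset.sum_congr rfl (fun p _ => e2 p)
              rw [hm2, hm3]
              ring
      obtain ⟨u'', hps, hDs⟩ : ∃ u'' : Fin m ≃ ↥({x : V | x ≠ v}),
          ((∑ p : Fin m, ∑ q : Fin m, |(p.val:ℝ) - q.val| * A ↑(u' p) ↑(u' q))
            = ∑ p : Fin m, ∑ q : Fin m, |(p.val:ℝ) - q.val| * A ↑(u'' p) ↑(u'' q))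
          ∧ ((∑ q : Fin m, |((u'.symm w').val:ℝ) - q.val| * A v ↑(u' q))
            ≤ ∑ j : Fin m, (j.val:ℝ) * A v ↑(u'' j)) := by
        rcases conv_max (fun j => A v ↑(u' j)) (fun j => hAnn _ _) (u'.symm w') with hcase | hcase
        · exact ⟨u', rfl, hcase⟩
        · refine ⟨(Fin.revPerm (n := m)).trans u', ?_, ?_⟩
          · have hrev2 : ∀ (B : Fin m → Fin m → ℝ),
                (∑ p : Fin m, ∑ q : Fin m, B p q) = ∑ p : Fin m, ∑ q : Fin m, B p.rev q.rev := by
              intro B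
              calc (∑ p : Fin m, ∑ q : Fin m, B p q)
                  = ∑ p : Fin m, ∑ q : Fin m, B (Fin.revPerm p) q :=
                    (Equiv.sum_comp (Fin.revPerm (n:=m)) (fun p => ∑ q : Fin m, B p q)).symm
                _ = ∑ p : Fin m, ∑ q : Fin m, B (Fin.revPerm p) (Fin.revPerm q) :=
                    Finset.sum_congr rfl (fun p _ =>
                      (Equiv.sum_comp (Fin.revPerm (n:=m)) (fun q => B (Fin.revPerm p) q)).symm)
                _ = ∑ p : Fin m, ∑ q : Fin m, B p.rev q.rev := by simp only [Fin.revPerm_apply]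
            rw [hrev2 (fun p q => |(p.val:ℝ) - q.val| * A ↑(u' p) ↑(u' q))]
            refine Finset.sum_congr rfl (fun p _ => Finset.sum_congr rfl (fun q _ => ?_))
            have habs : ((p.rev.val : ℕ):ℝ) - ((q.rev.val : ℕ):ℝ) = (q.val:ℝ) - p.val := by
              rw [cast_rev, cast_rev]; ring
            rw [habs, abs_sub_comm]
            rfl
          · calc (∑ q : Fin m, |((u'.symm w').val:ℝ) - q.val| * A v ↑(u' q))
                ≤ ∑ j : Fin m, ((m:ℝ) - 1 - j.val) * A v ↑(u' j) := hcase
              _ = ∑ j : Fin m, (fun j : Fin m => (j.val:ℝ) * A v ↑(((Fin.revPerm (n := m)).trans u') j)) (Fin.revPerm j) := by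
                  refine Finset.sum_congr rfl (fun j _ => ?_)
                  simp only [Equiv.trans_apply, Fin.revPerm_apply, Fin.rev_rev]
                  rw [cast_rev]
              _ = ∑ j : Fin m, (j.val:ℝ) * A v ↑(((Fin.revPerm (n := m)).trans u') j) :=
                  Equiv.sum_comp (Fin.revPerm (n:=m))
                    (fun j : Fin m => (j.val:ℝ) * A v ↑(((Fin.revPerm (n := m)).trans u') j))
      have hSre : (∑ y : ↥({x : V | x ≠ v}), A v ↑y) = ∑ j : Fin m, A v ↑(u'' j) :=
        (Equiv.sum_comp u'' (fun y => A v ↑y)).symm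
      refine ⟨extEquiv v u'', ?_⟩
      rw [ext_sum v A hAs u'']
      have hsplit : (∑ j : Fin m, ((j.val:ℝ)+1) * A v ↑(u'' j))
          = (∑ j : Fin m, (j.val:ℝ) * A v ↑(u'' j)) + ∑ j : Fin m, A v ↑(u'' j) := by
        rw [← Finset.sum_add_distrib]
        exact Finset.sum_congr rfl (fun j _ => by ring)
      rw [hsplit]
      linarith [hLHS, hu', hC, hE, hps, hDs, hSre]


def homToComap {α β : Type} (e : α ≃ β) (H : SimpleGraph β) : H →g H.comap ⇑e where
  toFun := ⇑e.symm
  map_rel' := by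
    intro x y hxy
    show H.Adj (e (e.symm x)) (e (e.symm y))
    simpa

lemma dist_comap_equiv {α β : Type} (e : α ≃ β) (H : SimpleGraph β) (hpre : H.Preconnected)
    (a b : α) : (H.comap ⇑e).dist a b = H.dist (e a) (e b) := by
  apply le_antisymm
  · obtain ⟨w, hw⟩ := (hpre (e a) (e b)).exists_walk_length_eq_dist
    have h1 := SimpleGraph.dist_le ((w.map (homToComap e H)).copy (e.symm_apply_apply a) (e.symm_apply_apply b))
    exact h1.trans_eq (((SimpleGraph.Walk.length_copy _ _ _).trans (SimpleGraph.Walk.length_map _ _)).trans hw)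
  · have hreach : (H.comap ⇑e).Reachable a b := by
      obtain ⟨w⟩ := hpre (e a) (e b)
      exact ⟨(w.map (homToComap e H)).copy (e.symm_apply_apply a) (e.symm_apply_apply b)⟩
    obtain ⟨w', hw'⟩ := hreach.exists_walk_length_eq_dist
    have h2 := SimpleGraph.dist_le (w'.map (SimpleGraph.Hom.comap ⇑e H))
    rwa [SimpleGraph.Walk.length_map, hw'] at h2

lemma half_sum {n : ℕ} (D : Fin n → Fin n → ℝ) (A : Matrix (Fin n) (Fin n) ℝ)
    (hD : ∀ i j, D i j = D j i) (hD0 : ∀ i, D i i = 0) (hA : ∀ i j, A i j = A j i) :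
    (∑ i : Fin n, ∑ j : Fin n, if i < j then D i j * A i j else 0)
      = (1/2) * ∑ i : Fin n, ∑ j : Fin n, D i j * A i j := by
  have key : ∀ i j : Fin n, D i j * A i j
      = (if i < j then D i j * A i j else 0) + (if j < i then D i j * A i j else 0) := by
    intro i j
    rcases lt_trichotomy i j with h | h | h
    · rw [if_pos h, if_neg (asymm h), add_zero]
    · subst h
      rw [if_neg (lt_irrefl _), hD0]
      ring
    · rw [if_neg (asymm h), if_pos h, zero_add]
  have e1 : ∑ i : Fin n, ∑ j : Fin n, D i j * A i j
      = (∑ i : Fin n, ∑ j : Fin n, if i < j then D i j * A i j else 0)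
        + ∑ i : Fin n, ∑ j : Fin n, if j < i then D i j * A i j else 0 := by
    rw [Finset.sum_congr rfl (fun i _ => Finset.sum_congr rfl (fun j _ => key i j))]
    simp only [Finset.sum_add_distrib]
  have e2 : (∑ i : Fin n, ∑ j : Fin n, if j < i then D i j * A i j else 0)
      = ∑ i : Fin n, ∑ j : Fin n, if i < j then D i j * A i j else 0 := by
    rw [Finset.sum_comm]
    exact Finset.sum_congr rfl fun i _ => Finset.sum_congr rfl fun j _ => by
      rw [hD j i, hA j i]
  linarith [e1, e2]

theorem stmt_2 {n : ℕ} (G : SimpleGraph (Fin n)) (hG : G.Connected)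
    (A : Matrix (Fin n) (Fin n) ℝ) (hsymm : A.IsSymm) (hnn : ∀ i j, 0 ≤ A i j) :
    ∃ P : SimpleGraph (Fin n), IsPathGraph P ∧ FA A G ≤ FA A P := by
  classical
  have hA : ∀ i j, A i j = A j i := fun i j => (hsymm.apply i j).symm
  obtain ⟨u, hu⟩ := key n (Fin n) (Fintype.card_fin n) G hG (fun i j => A i j) hA hnn
  refine ⟨(pathGraph n).comap ⇑u.symm, ⟨⟨u.symm, Iff.rfl⟩⟩, ?_⟩
  set P : SimpleGraph (Fin n) := (pathGraph n).comap ⇑u.symm with hPdef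
  have hPdist : ∀ x y : Fin n, (P.dist x y : ℝ) = |((u.symm x).val : ℝ) - ((u.symm y).val : ℝ)| := by
    intro x y
    rw [hPdef, dist_comap_equiv u.symm (pathGraph n) (pathGraph_preconnected n)]
    exact pathGraph_dist_real _ _
  have hG2 : FA A G = (1/2) * ∑ i : Fin n, ∑ j : Fin n, (G.dist i j : ℝ) * A i j := by
    rw [FA]
    exact half_sum _ A (fun i j => by rw [SimpleGraph.dist_comm])
      (fun i => by rw [SimpleGraph.dist_self]; simp) hA
  have hP2 : FA A P = (1/2) * ∑ i : Fin n, ∑ j : Fin n, (P.dist i j : ℝ) * A i j := by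
    rw [FA]
    exact half_sum _ A (fun i j => by rw [SimpleGraph.dist_comm])
      (fun i => by rw [SimpleGraph.dist_self]; simp) hA
  have hreind : (∑ i : Fin n, ∑ j : Fin n, (P.dist i j : ℝ) * A i j)
      = ∑ p : Fin n, ∑ q : Fin n, |(p.val:ℝ) - q.val| * A (u p) (u q) := by
    calc (∑ i : Fin n, ∑ j : Fin n, (P.dist i j : ℝ) * A i j)
        = ∑ p : Fin n, (fun i => ∑ j : Fin n, (P.dist i j : ℝ) * A i j) (u p) :=
          (Equiv.sum_comp u (fun i => ∑ j : Fin n, (P.dist i j : ℝ) * A i j)).symm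
      _ = ∑ p : Fin n, ∑ q : Fin n, (P.dist (u p) (u q) : ℝ) * A (u p) (u q) :=
          Finset.sum_congr rfl (fun p _ =>
            (Equiv.sum_comp u (fun j => (P.dist (u p) j : ℝ) * A (u p) j)).symm)
      _ = ∑ p : Fin n, ∑ q : Fin n, |(p.val:ℝ) - q.val| * A (u p) (u q) := by
          refine Finset.sum_congr rfl fun p _ => Finset.sum_congr rfl fun q _ => ?_
          rw [hPdist, Equiv.symm_apply_apply, Equiv.symm_apply_apply]
  rw [hG2, hP2, hreind]
  linarith [hu]
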